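/- Invertibility of formal exponentials as multipliers: in W = ℂ[[z, z̄]][[ħ]] with the Wick product, for any g ∈ ℂ[[z, z̄]] with g in the maximal ideal (no constant term) such that g has weight ≥ 3, and any J ∈ W, there exists a unique O ∈ W solving the equation J · e^{Φ/ħ} = e^{Φ/ħ} ⋆ O, where the equation is interpreted order by order in the weight filtration. -/

import Mathlib

/-- `A1 = ℂ[[z, z̄]]`: variable 0 is `z`, variable 1 is `z̄`. -/
abbrev A1 := MvPowerSeries (Fin 2) ℂ

/-- `W1 = ℂ[[z, z̄]][[ħ]]`, the one-variable formal Weyl space. -/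
abbrev W1 := PowerSeries A1

/-- Formal partial derivative with respect to variable `v`. -/
noncomputable def pd (v : Fin 2) (f : A1) : A1 :=
  fun m => ((m v : ℕ) + 1 : ℂ) * f (m + Finsupp.single v 1)

/-- The element `z` of `W1`. -/
noncomputable def zE : W1 := PowerSeries.C (MvPowerSeries.X 0)

/-- The element `z̄` of `W1`. -/
noncomputable def zbarE : W1 := PowerSeries.C (MvPowerSeries.X 1)

/-- The Wick product `f ⋆ g = Σ_{k≥0} (ħ^k/k!) (∂_{z̄}^k f)(∂_z^k g)` on `ℂ[[z, z̄]][[ħ]]`,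
written out coefficientwise in the formal variable ħ. -/
noncomputable def wick (f g : W1) : W1 :=
  PowerSeries.mk fun N =>
    ∑ k ∈ Finset.range (N + 1), ∑ p ∈ Finset.range (N - k + 1),
      ((k.factorial : ℂ)⁻¹ •
        ((pd 1)^[k] (PowerSeries.coeff p f) * (pd 0)^[k] (PowerSeries.coeff (N - k - p) g)))

/-- `∂_z` applied coefficientwise in ħ. -/
noncomputable def DzW (f : W1) : W1 :=
  PowerSeries.mk fun N => pd 0 (PowerSeries.coeff N f)

/-- `∂_{z̄}` applied coefficientwise in ħ. -/
noncomputable def DzbarW (f : W1) : W1 :=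
  PowerSeries.mk fun N => pd 1 (PowerSeries.coeff N f)

/-- The Bell-polynomial sequence `W_k := ħ^k e^{-Φ/ħ} ∂_{z̄}^k (e^{Φ/ħ}) ∈ W` for
`Φ = g ∈ ℂ[[z, z̄]]`, characterized by the recursion `W_0 = 1`,
`W_{k+1} = ħ ∂_{z̄} W_k + (∂_{z̄} g)·W_k`. -/
noncomputable def Wseq (g : A1) : ℕ → W1
  | 0 => 1
  | k + 1 =>
      (PowerSeries.X : W1) * DzbarW (Wseq g k) + PowerSeries.C (pd 1 g) * Wseq g k

/-- The coefficient of `ħ^N z^{m 0} z̄^{m 1}` in an element of `W1`. -/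
noncomputable def coeffAt (N : ℕ) (m : Fin 2 →₀ ℕ) (x : W1) : ℂ :=
  MvPowerSeries.coeff m (PowerSeries.coeff N x)

/-- `O` solves the equation `J·e^{g/ħ} = e^{g/ħ} ⋆ O`, interpreted order by order: after
multiplying by `e^{-g/ħ}` the equation reads `J = Σ_{k≥0} (1/k!) W_k ∂_z^k O`, where
`W_k = ħ^k e^{-g/ħ} ∂_{z̄}^k(e^{g/ħ})`, and the (weight-filtration convergent) sum is
required to hold coefficientwise as a `HasSum` in ℂ. -/
def IsToeplitzSol (g : A1) (J O : W1) : Prop :=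
  ∀ (N : ℕ) (m : Fin 2 →₀ ℕ),
    HasSum (fun k : ℕ =>
        coeffAt N m ((k.factorial : ℂ)⁻¹ • (Wseq g k * DzW^[k] O)))
      (coeffAt N m J)

namespace Stmt14

/-- weight of the monomial ħ^N z^{m0} z̄^{m1} -/
def wt (N : ℕ) (m : Fin 2 →₀ ℕ) : ℕ := 2*N + m 0 + m 1

lemma coeffAt_smul (N m) (c : ℂ) (x : W1) : coeffAt N m (c • x) = c * coeffAt N m x := rfl

lemma coeffAt_add (N m) (x y : W1) :
    coeffAt N m (x + y) = coeffAt N m x + coeffAt N m y := by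
  simp [coeffAt, map_add]

lemma coeffAt_mk (N m) (f : ℕ → A1) : coeffAt N m (PowerSeries.mk f) = f N m := by
  simp only [coeffAt, PowerSeries.coeff_mk]; rfl

lemma coeffAt_mul (N m) (x y : W1) : coeffAt N m (x * y) =
    ∑ p ∈ Finset.HasAntidiagonal.antidiagonal N, ∑ q ∈ Finset.HasAntidiagonal.antidiagonal m,
      coeffAt p.1 q.1 x * coeffAt p.2 q.2 y := by
  simp only [coeffAt, PowerSeries.coeff_mul, map_sum, MvPowerSeries.coeff_mul]

lemma coeffAt_one (N m) : coeffAt N m (1 : W1) = if N = 0 ∧ m = 0 then 1 else 0 := by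
  simp [coeffAt, PowerSeries.coeff_one]
  split <;> rename_i h
  · subst h; simp [MvPowerSeries.coeff_one]
  · simp [h]

lemma coeffAt_X (N m) : coeffAt N m (PowerSeries.X : W1) = if N = 1 ∧ m = 0 then 1 else 0 := by
  simp [coeffAt, PowerSeries.coeff_X]
  split <;> rename_i h
  · subst h; simp [MvPowerSeries.coeff_one]
  · simp [h]

lemma coeffAt_C (N m) (a : A1) : coeffAt N m (PowerSeries.C a) =
    if N = 0 then a m else 0 := by
  simp only [coeffAt, PowerSeries.coeff_C]
  split <;> rename_i h
  · exact rfl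
  · simp

lemma coeffAt_DzW (N m) (x : W1) :
    coeffAt N m (DzW x) = ((m 0 : ℕ) + 1 : ℂ) * coeffAt N (m + Finsupp.single 0 1) x := by
  simp only [coeffAt, DzW, PowerSeries.coeff_mk]; rfl

lemma coeffAt_DzbarW (N m) (x : W1) :
    coeffAt N m (DzbarW x) = ((m 1 : ℕ) + 1 : ℂ) * coeffAt N (m + Finsupp.single 1 1) x := by
  simp only [coeffAt, DzbarW, PowerSeries.coeff_mk]; rfl

/-- `x` has weight ≥ w : all coefficients of weight < w vanish. -/
def LW (w : ℕ) (x : W1) : Prop := ∀ N m, wt N m < w → coeffAt N m x = 0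

lemma LW_zero (x : W1) : LW 0 x := fun _ _ h => absurd h (Nat.not_lt_zero _)

lemma LW.mono {w w' : ℕ} {x : W1} (h : w' ≤ w) (hx : LW w x) : LW w' x :=
  fun N m hw => hx N m (lt_of_lt_of_le hw h)

lemma wt_split {N : ℕ} {m : Fin 2 →₀ ℕ} {p : ℕ × ℕ} {q : (Fin 2 →₀ ℕ) × (Fin 2 →₀ ℕ)}
    (hp : p.1 + p.2 = N) (hq : q.1 + q.2 = m) :
    wt p.1 q.1 + wt p.2 q.2 = wt N m := by
  have h0 : q.1 0 + q.2 0 = m 0 := by rw [← hq, Finsupp.add_apply]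
  have h1 : q.1 1 + q.2 1 = m 1 := by rw [← hq, Finsupp.add_apply]
  simp only [wt]; omega

lemma LW.mul {a b : ℕ} {x y : W1} (hx : LW a x) (hy : LW b y) : LW (a + b) (x * y) := by
  intro N m hw
  rw [coeffAt_mul]
  refine Finset.sum_eq_zero fun p hp => Finset.sum_eq_zero fun q hq => ?_
  rw [Finset.HasAntidiagonal.mem_antidiagonal] at hp hq
  have hs := wt_split hp hq
  by_cases h1 : wt p.1 q.1 < a
  · rw [hx _ _ h1, zero_mul]
  · rw [hy _ _ (by omega), mul_zero]

lemma LW.add {w : ℕ} {x y : W1} (hx : LW w x) (hy : LW w y) : LW w (x + y) := by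
  intro N m hw; rw [coeffAt_add, hx _ _ hw, hy _ _ hw, add_zero]

lemma LW_X : LW 2 (PowerSeries.X : W1) := by
  intro N m hw
  rw [coeffAt_X]
  have : ¬(N = 1 ∧ m = 0) := by
    rintro ⟨rfl, rfl⟩; simp [wt] at hw
  simp [this]

end Stmt14
namespace Stmt14

lemma LW_Cpd {g : A1}
    (hg : ∀ m : Fin 2 →₀ ℕ, m 0 + m 1 < 3 → MvPowerSeries.coeff m g = 0) :
    LW 2 (PowerSeries.C (pd 1 g)) := by
  intro N m hw
  rw [coeffAt_C]
  split <;> rename_i h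
  · subst h
    show ((m 1 : ℕ) + 1 : ℂ) * g (m + Finsupp.single 1 1) = 0
    have h0 : ((m + Finsupp.single 1 1 : Fin 2 →₀ ℕ)) 0 = m 0 := by
      simp [Finsupp.add_apply, Finsupp.single_apply]
    have h1 : ((m + Finsupp.single 1 1 : Fin 2 →₀ ℕ)) 1 = m 1 + 1 := by
      simp [Finsupp.add_apply]
    have := hg (m + Finsupp.single 1 1) (by simp only [wt] at hw; omega)
    rw [show g (m + Finsupp.single 1 1) = MvPowerSeries.coeff (m + Finsupp.single 1 1) g
      from rfl, this, mul_zero]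
  · rfl

lemma LW_DzbarW {w : ℕ} {x : W1} (hx : LW (w + 1) x) : LW w (DzbarW x) := by
  intro N m hw
  rw [coeffAt_DzbarW]
  have h0 : ((m + Finsupp.single 1 1 : Fin 2 →₀ ℕ)) 0 = m 0 := by
    simp [Finsupp.add_apply, Finsupp.single_apply]
  have h1 : ((m + Finsupp.single 1 1 : Fin 2 →₀ ℕ)) 1 = m 1 + 1 := by simp [Finsupp.add_apply]
  rw [hx N (m + Finsupp.single 1 1) (by simp only [wt] at hw ⊢; omega), mul_zero]

lemma LW_DzbarW_one (w : ℕ) : LW w (DzbarW (1 : W1)) := by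
  intro N m _
  rw [coeffAt_DzbarW, coeffAt_one]
  have : ¬(N = 0 ∧ m + Finsupp.single 1 1 = 0) := by
    rintro ⟨-, h⟩
    have := congrArg (fun f : Fin 2 →₀ ℕ => f 1) h
    simp [Finsupp.add_apply] at this
  simp [this]

lemma LW_Wseq {g : A1}
    (hg : ∀ m : Fin 2 →₀ ℕ, m 0 + m 1 < 3 → MvPowerSeries.coeff m g = 0) :
    ∀ k, LW (k + 2) (Wseq g (k + 1)) := by
  intro k
  induction k with
  | zero =>
    show LW 2 (PowerSeries.X * DzbarW (Wseq g 0) + PowerSeries.C (pd 1 g) * Wseq g 0)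
    have h1 : LW 2 (PowerSeries.X * DzbarW (Wseq g 0)) := by
      have := LW.mul LW_X (LW_DzbarW_one 0)
      simpa [Wseq] using this
    have h2 : LW 2 (PowerSeries.C (pd 1 g) * Wseq g 0) := by
      have := LW.mul (LW_Cpd hg) (LW_zero (Wseq g 0))
      simpa using this
    exact h1.add h2
  | succ k ih =>
    show LW (k + 3) (PowerSeries.X * DzbarW (Wseq g (k+1)) + PowerSeries.C (pd 1 g) * Wseq g (k+1))
    have h1 : LW (2 + (k + 1)) (PowerSeries.X * DzbarW (Wseq g (k+1))) :=
      LW.mul LW_X (LW_DzbarW ih)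
    have h2 : LW (2 + (k + 2)) (PowerSeries.C (pd 1 g) * Wseq g (k+1)) :=
      LW.mul (LW_Cpd hg) ih
    exact (h1.mono (by omega)).add (h2.mono (by omega))

lemma dzw_congr : ∀ (k : ℕ) (N : ℕ) (m : Fin 2 →₀ ℕ) (x y : W1),
    coeffAt N (m + Finsupp.single 0 k) x = coeffAt N (m + Finsupp.single 0 k) y →
    coeffAt N m (DzW^[k] x) = coeffAt N m (DzW^[k] y) := by
  intro k
  induction k with
  | zero => intro N m x y h; simpa using h
  | succ k ih =>
    intro N m x y h
    rw [Function.iterate_succ_apply', Function.iterate_succ_apply', coeffAt_DzW, coeffAt_DzW]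
    congr 1
    refine ih N (m + Finsupp.single 0 1) x y ?_
    have : m + Finsupp.single 0 1 + Finsupp.single 0 k = m + Finsupp.single 0 (k + 1) := by
      rw [add_assoc, ← Finsupp.single_add, add_comm 1 k]
    rw [this]
    exact h

end Stmt14
namespace Stmt14

/-- The k-th term of the Toeplitz expansion, coefficientwise. -/
noncomputable def trm (g : A1) (x : W1) (k N : ℕ) (m : Fin 2 →₀ ℕ) : ℂ :=
  coeffAt N m ((k.factorial : ℂ)⁻¹ • (Wseq g k * DzW^[k] x))

lemma trm_zero_idx (g : A1) (x : W1) (N m) : trm g x 0 N m = coeffAt N m x := by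
  simp only [trm, Nat.factorial_zero, Nat.cast_one, inv_one, one_smul,
    Function.iterate_zero, id_eq]
  show coeffAt N m (Wseq g 0 * x) = coeffAt N m x
  rw [show Wseq g 0 = 1 from rfl, one_mul]

lemma trm_vanish {g : A1}
    (hg : ∀ m : Fin 2 →₀ ℕ, m 0 + m 1 < 3 → MvPowerSeries.coeff m g = 0)
    (x : W1) {k N : ℕ} {m : Fin 2 →₀ ℕ} (hk : wt N m < k) : trm g x k N m = 0 := by
  obtain ⟨k', rfl⟩ : ∃ k', k = k' + 1 := ⟨k - 1, by omega⟩
  rw [trm, coeffAt_smul, coeffAt_mul]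
  rw [Finset.sum_eq_zero, mul_zero]
  intro p hp
  refine Finset.sum_eq_zero fun q hq => ?_
  rw [Finset.HasAntidiagonal.mem_antidiagonal] at hp hq
  have hs := wt_split hp hq
  rw [LW_Wseq hg k' p.1 q.1 (by omega), zero_mul]

lemma trm_congr {g : A1}
    (hg : ∀ m : Fin 2 →₀ ℕ, m 0 + m 1 < 3 → MvPowerSeries.coeff m g = 0)
    {x y : W1} {w : ℕ} (hxy : ∀ N m, wt N m < w → coeffAt N m x = coeffAt N m y)
    {k : ℕ} (hk : 1 ≤ k) {N : ℕ} {m : Fin 2 →₀ ℕ} (hw : wt N m ≤ w) :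
    trm g x k N m = trm g y k N m := by
  obtain ⟨k', rfl⟩ : ∃ k', k = k' + 1 := ⟨k - 1, by omega⟩
  rw [trm, trm, coeffAt_smul, coeffAt_smul, coeffAt_mul, coeffAt_mul]
  congr 1
  refine Finset.sum_congr rfl fun p hp => Finset.sum_congr rfl fun q hq => ?_
  rw [Finset.HasAntidiagonal.mem_antidiagonal] at hp hq
  have hs := wt_split hp hq
  by_cases hW : coeffAt p.1 q.1 (Wseq g (k' + 1)) = 0
  · rw [hW, zero_mul, zero_mul]
  · congr 1
    refine dzw_congr (k' + 1) p.2 q.2 x y ?_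
    have hbig : ¬ (wt p.1 q.1 < k' + 2) := fun h => hW (LW_Wseq hg k' p.1 q.1 h)
    refine hxy p.2 (q.2 + Finsupp.single 0 (k' + 1)) ?_
    rw [wt, Finsupp.add_apply, Finsupp.add_apply, Finsupp.single_eq_same,
      Finsupp.single_eq_of_ne (by decide : (1 : Fin 2) ≠ 0)]
    simp only [wt] at hs hw hbig
    omega

/-- Sum of the higher (k ≥ 1) terms; only weight-many of them are nonzero. -/
noncomputable def Ssum (g : A1) (x : W1) (N : ℕ) (m : Fin 2 →₀ ℕ) : ℂ :=
  ∑ k ∈ Finset.range (wt N m), trm g x (k + 1) N m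

/-- One step of the fixed-point iteration. -/
noncomputable def Fm (g : A1) (J x : W1) : W1 :=
  PowerSeries.mk fun N => (fun m => coeffAt N m J - Ssum g x N m : A1)

lemma coeffAt_Fm (g : A1) (J x : W1) (N m) :
    coeffAt N m (Fm g J x) = coeffAt N m J - Ssum g x N m := by
  rw [Fm]; exact coeffAt_mk _ _ _

lemma Fm_agree {g : A1}
    (hg : ∀ m : Fin 2 →₀ ℕ, m 0 + m 1 < 3 → MvPowerSeries.coeff m g = 0)
    (J : W1) {x y : W1} {w : ℕ}
    (hxy : ∀ N m, wt N m < w → coeffAt N m x = coeffAt N m y) :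
    ∀ N m, wt N m < w + 1 → coeffAt N m (Fm g J x) = coeffAt N m (Fm g J y) := by
  intro N m hw
  rw [coeffAt_Fm, coeffAt_Fm]
  congr 1
  exact Finset.sum_congr rfl fun k _ => trm_congr hg hxy (Nat.le_add_left 1 k) (by omega)

lemma sol_iff {g : A1}
    (hg : ∀ m : Fin 2 →₀ ℕ, m 0 + m 1 < 3 → MvPowerSeries.coeff m g = 0)
    (J O : W1) : IsToeplitzSol g J O ↔
      ∀ N m, coeffAt N m O = coeffAt N m J - Ssum g O N m := by
  have hfin : ∀ N m, HasSum (fun k => trm g O k N m)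
      (∑ k ∈ Finset.range (wt N m + 1), trm g O k N m) := by
    intro N m
    exact hasSum_sum_of_ne_finset_zero fun k hk =>
      trm_vanish hg O (by simpa [Nat.lt_succ_iff, not_le] using (Finset.mem_range.not.mp hk))
  have hsum : ∀ N m, ∑ k ∈ Finset.range (wt N m + 1), trm g O k N m
      = coeffAt N m O + Ssum g O N m := by
    intro N m
    rw [Finset.sum_range_succ', trm_zero_idx]
    rw [add_comm]
    rfl
  constructor
  · intro h N m
    have h1 : HasSum (fun k => trm g O k N m) (coeffAt N m J) := h N m
    have h2 := h1.unique (hfin N m)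
    rw [hsum N m] at h2
    rw [h2]; ring
  · intro h N m
    have h2 := hfin N m
    rw [hsum N m, h N m] at h2
    convert h2 using 1
    · rfl
    ring

end Stmt14
namespace Stmt14

/-- Successive approximations to the solution. -/
noncomputable def Oseq (g : A1) (J : W1) : ℕ → W1
  | 0 => 0
  | n + 1 => Fm g J (Oseq g J n)

lemma Oseq_agree {g : A1}
    (hg : ∀ m : Fin 2 →₀ ℕ, m 0 + m 1 < 3 → MvPowerSeries.coeff m g = 0) (J : W1) :
    ∀ n N m, wt N m < n → coeffAt N m (Oseq g J n) = coeffAt N m (Oseq g J (n + 1)) := by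
  intro n
  induction n with
  | zero => intro N m h; omega
  | succ n ih =>
    intro N m h
    exact Fm_agree hg J ih N m h

lemma Oseq_agree_le {g : A1}
    (hg : ∀ m : Fin 2 →₀ ℕ, m 0 + m 1 < 3 → MvPowerSeries.coeff m g = 0) (J : W1) :
    ∀ a b, a ≤ b → ∀ N m, wt N m < a →
      coeffAt N m (Oseq g J a) = coeffAt N m (Oseq g J b) := by
  intro a b hab
  induction b, hab using Nat.le_induction with
  | base => intro N m _; rfl
  | succ b hab ih =>
    intro N m h
    rw [ih N m h]
    exact Oseq_agree hg J b N m (lt_of_lt_of_le h hab)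

/-- The limit of the approximations. -/
noncomputable def Olim (g : A1) (J : W1) : W1 :=
  PowerSeries.mk fun N => (fun m => coeffAt N m (Oseq g J (wt N m + 1)) : A1)

lemma coeffAt_Olim (g : A1) (J : W1) (N m) :
    coeffAt N m (Olim g J) = coeffAt N m (Oseq g J (wt N m + 1)) := by
  rw [Olim]; exact coeffAt_mk _ _ _

lemma Olim_agree {g : A1}
    (hg : ∀ m : Fin 2 →₀ ℕ, m 0 + m 1 < 3 → MvPowerSeries.coeff m g = 0) (J : W1) :
    ∀ n N m, wt N m < n → coeffAt N m (Olim g J) = coeffAt N m (Oseq g J n) := by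
  intro n N m h
  rw [coeffAt_Olim]
  exact Oseq_agree_le hg J (wt N m + 1) n h N m (Nat.lt_succ_self _)

lemma Olim_fixed {g : A1}
    (hg : ∀ m : Fin 2 →₀ ℕ, m 0 + m 1 < 3 → MvPowerSeries.coeff m g = 0) (J : W1) :
    ∀ N m, coeffAt N m (Olim g J) = coeffAt N m J - Ssum g (Olim g J) N m := by
  intro N m
  have h1 : coeffAt N m (Fm g J (Olim g J)) = coeffAt N m (Fm g J (Oseq g J (wt N m))) :=
    Fm_agree hg J (Olim_agree hg J (wt N m)) N m (Nat.lt_succ_self _)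
  have h2 : coeffAt N m (Fm g J (Oseq g J (wt N m))) = coeffAt N m (Olim g J) := by
    rw [coeffAt_Olim]
    rfl
  rw [← coeffAt_Fm g J (Olim g J), h1]
  exact h2.symm

end Stmt14


open Stmt14

/-- invertibility of formal exponentials as multipliers in
`W = ℂ[[z, z̄]][[ħ]]` with the Wick product: for any `g ∈ ℂ[[z, z̄]]` with no constant term
and of weight ≥ 3 (all monomials of total degree < 3 vanish), and any `J ∈ W`, there
exists a unique `O ∈ W` solving `J·e^{g/ħ} = e^{g/ħ} ⋆ O` order by order in the weight
filtration. -/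
theorem stmt_14 (g : A1)
    (hg : ∀ m : Fin 2 →₀ ℕ, m 0 + m 1 < 3 → MvPowerSeries.coeff m g = 0)
    (J : W1) : ∃! O : W1, IsToeplitzSol g J O := by
  refine ⟨Olim g J, (sol_iff hg J _).mpr (Olim_fixed hg J), ?_⟩
  intro O' hO'
  have hfix' := (sol_iff hg J O').mp hO'
  have hfix := Olim_fixed hg J
  have key : ∀ w N m, wt N m < w → coeffAt N m O' = coeffAt N m (Olim g J) := by
    intro w
    induction w with
    | zero => intro N m h; omega
    | succ w ih =>
      intro N m h
      rw [hfix' N m, hfix N m]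
      congr 1
      refine Finset.sum_congr rfl fun k _ => trm_congr hg ih (Nat.le_add_left 1 k) (by omega)
  ext N m
  exact key (wt N m + 1) N m (Nat.lt_succ_self _)
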